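/- arXiv:2601.21457 — 3 statements merged into one kernel-verified Lean document; each statement's English description precedes it below -/
import Mathlib

section
/- Let G be a graph with m edges, let ε ∈ (0,1), m̄ > 0 with m̄ ≥ m/4, and set k = √(2n√m̄/ε) and k' = min(k, m̄/(εk)), where n = |V|. Define V_H = {v : deg(v) > k} and V_{L2} = {v : k' < deg(v) ≤ k}. Then the number of edges with one endpoint in V_{L2} ∪ V_H and the other endpoint in V_H is at most 64·ε·m̄. -/
/-- For `ε ∈ (0,1)`, `m̄ ≥ m/4`, with thresholds `k = √(2n√m̄/ε)` and
`k' = min(k, m̄/(εk))`, the number of edges of `G` with one endpoint of degree `> k'`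
(i.e. in `V_{L2} ∪ V_H`) and the other endpoint of degree `> k` (i.e. in `V_H`)
is at most `64 ε m̄`. -/
theorem stmt1 {V : Type*} [Fintype V] [DecidableEq V] (G : SimpleGraph V)
    [DecidableRel G.Adj]
    (ε mbar : ℝ) (hε0 : 0 < ε) (hε1 : ε < 1) (hmbar : 0 < mbar)
    (hm : (G.edgeFinset.card : ℝ) / 4 ≤ mbar)
    (k k' : ℝ)
    (hk : k = Real.sqrt (2 * (Fintype.card V : ℝ) * Real.sqrt mbar / ε))
    (hk' : k' = min k (mbar / (ε * k))) :
    ({e : Sym2 V | e ∈ G.edgeSet ∧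
        ∃ u v : V, e = s(u, v) ∧ k' < (G.degree u : ℝ) ∧ k < (G.degree v : ℝ)}.ncard : ℝ)
      ≤ 64 * ε * mbar := by
  classical
  have hRHS : (0:ℝ) ≤ 64 * ε * mbar := by positivity
  by_cases hV : Fintype.card V = 0
  · have hempty : ({e : Sym2 V | e ∈ G.edgeSet ∧
        ∃ u v : V, e = s(u, v) ∧ k' < (G.degree u : ℝ) ∧ k < (G.degree v : ℝ)})
        = (∅ : Set (Sym2 V)) := by
      ext e
      simp only [Set.mem_setOf_eq, Set.mem_empty_iff_false, iff_false, not_and]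
      rintro - ⟨u, -⟩
      exact (Fintype.card_eq_zero_iff.mp hV).false u
    rw [hempty]
    simpa using hRHS
  · have hn1 : (1:ℝ) ≤ (Fintype.card V : ℝ) := by
      exact_mod_cast Nat.one_le_iff_ne_zero.mpr hV
    have hsm : 0 < Real.sqrt mbar := Real.sqrt_pos.mpr hmbar
    have hk0 : 0 < k := by
      rw [hk]; apply Real.sqrt_pos.mpr; positivity
    have hk2 : k ^ 2 = 2 * (Fintype.card V : ℝ) * Real.sqrt mbar / ε := by
      rw [hk]; exact Real.sq_sqrt (by positivity)
    by_cases hcase : mbar / (ε * k) ≤ k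
    · -- main counting case
      have hk'eq : k' = mbar / (ε * k) := by rw [hk']; exact min_eq_right hcase
      have hk'0 : 0 < k' := by rw [hk'eq]; positivity
      set S : Finset V := Finset.univ.filter (fun v => k' < (G.degree v : ℝ)) with hS
      set H : Finset V := Finset.univ.filter (fun v => k < (G.degree v : ℝ)) with hH
      have hsum : ∑ v, (G.degree v : ℝ) = 2 * (G.edgeFinset.card : ℝ) := by
        have := G.sum_degrees_eq_twice_card_edges
        exact_mod_cast this
      have h2m : 2 * (G.edgeFinset.card : ℝ) ≤ 8 * mbar := by linarith
      have key : ∀ (t : ℝ), 0 < t → ∀ (T : Finset V),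
          (∀ v ∈ T, t < (G.degree v : ℝ)) → (T.card : ℝ) ≤ 8 * mbar / t := by
        intro t ht T hT
        have h1 : (T.card : ℝ) * t ≤ ∑ v ∈ T, (G.degree v : ℝ) := by
          calc (T.card : ℝ) * t = ∑ _v ∈ T, t := by
                rw [Finset.sum_const, nsmul_eq_mul]
            _ ≤ _ := Finset.sum_le_sum (fun v hv => (hT v hv).le)
        have h2 : ∑ v ∈ T, (G.degree v : ℝ) ≤ ∑ v, (G.degree v : ℝ) :=
          Finset.sum_le_sum_of_subset_of_nonneg (Finset.subset_univ T)
            (by intros; positivity)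
        rw [le_div_iff₀ ht]
        linarith
      have hScard : (S.card : ℝ) ≤ 8 * mbar / k' := by
        apply key k' hk'0
        intro v hv
        simpa [hS] using hv
      have hHcard : (H.card : ℝ) ≤ 8 * mbar / k := by
        apply key k hk0
        intro v hv
        simpa [hH] using hv
      have hsub : {e : Sym2 V | e ∈ G.edgeSet ∧
          ∃ u v : V, e = s(u, v) ∧ k' < (G.degree u : ℝ) ∧ k < (G.degree v : ℝ)}
          ⊆ ↑((S ×ˢ H).image (fun p : V × V => s(p.1, p.2))) := by
        rintro e ⟨-, u, v, rfl, hu, hv⟩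
        simp only [Finset.coe_image, Set.mem_image, Finset.mem_coe, Finset.mem_product]
        exact ⟨(u, v), ⟨by simp [hS, hu], by simp [hH, hv]⟩, rfl⟩
      have hncard : ({e : Sym2 V | e ∈ G.edgeSet ∧
          ∃ u v : V, e = s(u, v) ∧ k' < (G.degree u : ℝ) ∧ k < (G.degree v : ℝ)}.ncard : ℝ)
          ≤ (S.card : ℝ) * (H.card : ℝ) := by
        have h1 := Set.ncard_le_ncard hsub (Finset.finite_toSet _)
        rw [Set.ncard_coe_finset] at h1
        have h2 := Finset.card_image_le
          (s := S ×ˢ H) (f := fun p : V × V => s(p.1, p.2))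
        rw [Finset.card_product] at h2
        exact_mod_cast h1.trans h2
      have hprod : (8 * mbar / k') * (8 * mbar / k) = 64 * ε * mbar := by
        rw [hk'eq]
        field_simp
        ring
      calc ({e : Sym2 V | e ∈ G.edgeSet ∧
          ∃ u v : V, e = s(u, v) ∧ k' < (G.degree u : ℝ) ∧ k < (G.degree v : ℝ)}.ncard : ℝ)
          ≤ (S.card : ℝ) * (H.card : ℝ) := hncard
        _ ≤ (8 * mbar / k') * (8 * mbar / k) := by
            apply mul_le_mul hScard hHcard (by positivity) (by positivity)
        _ = 64 * ε * mbar := hprod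
    · -- V_H is empty since k > n
      push_neg at hcase
      have h1 : ε * k * k < mbar := by
        have := (lt_div_iff₀ (by positivity : 0 < ε * k)).mp hcase
        linarith [this]
      have hk2' : k ^ 2 * ε = 2 * (Fintype.card V : ℝ) * Real.sqrt mbar := by
        field_simp at hk2 ⊢
        linarith [hk2]
      have hmm : mbar = Real.sqrt mbar * Real.sqrt mbar :=
        (Real.mul_self_sqrt hmbar.le).symm
      have h2n : 2 * (Fintype.card V : ℝ) < Real.sqrt mbar := by
        nlinarith [hk2', h1, hsm]
      have hnk : (Fintype.card V : ℝ) < k := by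
        have hsq : ((Fintype.card V : ℝ)) ^ 2 < k ^ 2 := by
          nlinarith [hk2', h2n, hn1, hε1, hε0, sq_nonneg k]
        exact lt_of_pow_lt_pow_left₀ 2 hk0.le hsq
      have hempty : ({e : Sym2 V | e ∈ G.edgeSet ∧
          ∃ u v : V, e = s(u, v) ∧ k' < (G.degree u : ℝ) ∧ k < (G.degree v : ℝ)})
          = (∅ : Set (Sym2 V)) := by
        ext e
        simp only [Set.mem_setOf_eq, Set.mem_empty_iff_false, iff_false, not_and]
        rintro - ⟨u, v, -, -, hv⟩
        have hd : (G.degree v : ℝ) < (Fintype.card V : ℝ) := by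
          exact_mod_cast G.degree_lt_card_verts v
        linarith
      rw [hempty]
      simpa using hRHS
end

section
/- Let G be a graph with m edges, ε ∈ (0,1), m̄ ≥ m/4, and set k = √(2n√m̄/ε), k' = min(k, m̄/(εk)). Let m_LL be the number of edges with both endpoints of degree at most k, and m_{L1H} the number of edges with one endpoint of degree at most k' and the other of degree greater than k. Then m_LL + m_{L1H} ≥ m − 64·ε·m̄. -/
set_option maxHeartbeats 1000000


/-- For `ε ∈ (0,1)`, `m̄ ≥ m/4`, with thresholds `k = √(2n√m̄/ε)` and
`k' = min(k, m̄/(εk))`: letting `m_LL` be the number of edges with both endpoints of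
degree at most `k` and `m_{L1H}` the number of edges with one endpoint of degree at
most `k'` and the other of degree greater than `k`, we have
`m_LL + m_{L1H} ≥ m − 64 ε m̄`. -/
theorem stmt2 {V : Type*} [Fintype V] [DecidableEq V] (G : SimpleGraph V)
    [DecidableRel G.Adj]
    (ε mbar : ℝ) (hε0 : 0 < ε) (hε1 : ε < 1) (hmbar : 0 < mbar)
    (hm : (G.edgeFinset.card : ℝ) / 4 ≤ mbar)
    (k k' : ℝ)
    (hk : k = Real.sqrt (2 * (Fintype.card V : ℝ) * Real.sqrt mbar / ε))
    (hk' : k' = min k (mbar / (ε * k)))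
    (mLL mL1H : ℕ)
    (hmLL : mLL = {e : Sym2 V | e ∈ G.edgeSet ∧ ∀ v ∈ e, (G.degree v : ℝ) ≤ k}.ncard)
    (hmL1H : mL1H = {e : Sym2 V | e ∈ G.edgeSet ∧
        ∃ u v : V, e = s(u, v) ∧ (G.degree u : ℝ) ≤ k' ∧ k < (G.degree v : ℝ)}.ncard) :
    (mLL : ℝ) + (mL1H : ℝ) ≥ (G.edgeFinset.card : ℝ) - 64 * ε * mbar := by
  classical
  have hk'le : k' ≤ k := hk' ▸ min_le_left _ _
  by_cases hV : Fintype.card V = 0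
  · -- empty graph
    have hemp : IsEmpty V := Fintype.card_eq_zero_iff.mp hV
    have hE : G.edgeFinset = ∅ := by
      ext e
      induction e using Sym2.ind with
      | _ a b => exact (hemp.false a).elim
    have h0 : (0:ℝ) ≤ (mLL:ℝ) + (mL1H:ℝ) := by positivity
    have : (0:ℝ) < 64 * ε * mbar := by positivity
    rw [hE]
    simp only [Finset.card_empty, Nat.cast_zero]
    linarith
  have hn1 : (1:ℝ) ≤ (Fintype.card V : ℝ) := by
    exact_mod_cast Nat.one_le_iff_ne_zero.mpr hV
  have hs : (0:ℝ) < Real.sqrt mbar := Real.sqrt_pos.mpr hmbar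
  have hargpos : 0 < 2 * (Fintype.card V : ℝ) * Real.sqrt mbar / ε := by positivity
  have hkpos : 0 < k := hk ▸ Real.sqrt_pos.mpr hargpos
  have hksq : k ^ 2 = 2 * (Fintype.card V : ℝ) * Real.sqrt mbar / ε := by
    rw [hk, Real.sq_sqrt hargpos.le]
  have hk'pos : 0 < k' := by
    rw [hk']
    exact lt_min hkpos (div_pos hmbar (mul_pos hε0 hkpos))
  set n : ℝ := (Fintype.card V : ℝ) with hn
  set PLL : Sym2 V → Prop := fun e => ∀ v ∈ e, (G.degree v : ℝ) ≤ k with hPLL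
  set PL : Sym2 V → Prop := fun e =>
    ∃ u v : V, e = s(u, v) ∧ (G.degree u : ℝ) ≤ k' ∧ k < (G.degree v : ℝ) with hPL
  set PB : Sym2 V → Prop := fun e =>
    (∀ v ∈ e, k' < (G.degree v : ℝ)) ∧ ∃ v ∈ e, k < (G.degree v : ℝ) with hPB
  -- ncard conversions
  have hA : mLL = (G.edgeFinset.filter PLL).card := by
    rw [hmLL]
    have : {e : Sym2 V | e ∈ G.edgeSet ∧ ∀ v ∈ e, (G.degree v : ℝ) ≤ k}
        = ↑(G.edgeFinset.filter PLL) := by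
      ext e
      simp [hPLL, SimpleGraph.mem_edgeFinset]
    rw [this, Set.ncard_coe_finset]
  have hB : mL1H = (G.edgeFinset.filter PL).card := by
    rw [hmL1H]
    have : {e : Sym2 V | e ∈ G.edgeSet ∧
        ∃ u v : V, e = s(u, v) ∧ (G.degree u : ℝ) ≤ k' ∧ k < (G.degree v : ℝ)}
        = ↑(G.edgeFinset.filter PL) := by
      ext e
      simp [hPL, SimpleGraph.mem_edgeFinset]
    rw [this, Set.ncard_coe_finset]
  -- covering
  have hcov : ∀ e ∈ G.edgeFinset, PLL e ∨ PL e ∨ PB e := by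
    intro e _
    induction e using Sym2.ind with
    | _ a b =>
      by_cases hLL : ∀ v ∈ s(a,b), (G.degree v : ℝ) ≤ k
      · exact Or.inl hLL
      push_neg at hLL
      obtain ⟨w, hw, hwk⟩ := hLL
      rcases Sym2.mem_iff.mp hw with rfl | rfl
      · -- deg a > k
        by_cases hb : (G.degree b : ℝ) ≤ k'
        · exact Or.inr (Or.inl ⟨b, w, Sym2.eq_swap, hb, hwk⟩)
        · push_neg at hb
          refine Or.inr (Or.inr ⟨?_, ⟨w, Sym2.mem_mk_left _ _, hwk⟩⟩)
          intro v hv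
          rcases Sym2.mem_iff.mp hv with rfl | rfl
          · exact lt_of_le_of_lt hk'le hwk
          · exact hb
      · -- deg b > k
        by_cases ha : (G.degree a : ℝ) ≤ k'
        · exact Or.inr (Or.inl ⟨a, w, rfl, ha, hwk⟩)
        · push_neg at ha
          refine Or.inr (Or.inr ⟨?_, ⟨w, Sym2.mem_mk_right _ _, hwk⟩⟩)
          intro v hv
          rcases Sym2.mem_iff.mp hv with rfl | rfl
          · exact ha
          · exact lt_of_le_of_lt hk'le hwk
  have hcard : G.edgeFinset.card ≤ (G.edgeFinset.filter PLL).card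
      + (G.edgeFinset.filter PL).card + (G.edgeFinset.filter PB).card := by
    have h1 : G.edgeFinset = G.edgeFinset.filter (fun e => PLL e ∨ PL e ∨ PB e) :=
      (Finset.filter_true_of_mem hcov).symm
    calc G.edgeFinset.card
        = (G.edgeFinset.filter (fun e => PLL e ∨ PL e ∨ PB e)).card := by rw [← h1]
      _ = ((G.edgeFinset.filter PLL) ∪ ((G.edgeFinset.filter PL) ∪
            (G.edgeFinset.filter PB))).card := by
          rw [← Finset.filter_or, ← Finset.filter_or]
      _ ≤ (G.edgeFinset.filter PLL).card + ((G.edgeFinset.filter PL) ∪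
            (G.edgeFinset.filter PB)).card := Finset.card_union_le _ _
      _ ≤ _ := by
          have := Finset.card_union_le (G.edgeFinset.filter PL) (G.edgeFinset.filter PB)
          omega
  -- bound on bad edges via injection into H ×ˢ T
  set Hf : Finset V := Finset.univ.filter (fun v => k < (G.degree v : ℝ)) with hHf
  set Tf : Finset V := Finset.univ.filter (fun v => k' < (G.degree v : ℝ)) with hTf
  set f : Sym2 V → V × V := fun e =>
    if k < (G.degree (Quot.out e).1 : ℝ) then Quot.out e
    else ((Quot.out e).2, (Quot.out e).1) with hf
  have hfmk : ∀ e : Sym2 V, s((f e).1, (f e).2) = e := by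
    intro e
    rw [hf]
    dsimp only
    split
    · exact e.out_eq
    · rw [Sym2.eq_swap]; exact e.out_eq
  have hCbound : ((G.edgeFinset.filter PB).card : ℝ) ≤ (Hf.card : ℝ) * (Tf.card : ℝ) := by
    have : (G.edgeFinset.filter PB).card ≤ (Hf ×ˢ Tf).card := by
      apply Finset.card_le_card_of_injOn f
      · intro e he
        rw [Finset.mem_coe, Finset.mem_filter] at he
        obtain ⟨-, hall, w, hw, hwk⟩ := he
        have h2 : (f e).2 ∈ e := by
          have hmm := Sym2.mem_mk_right (f e).1 (f e).2
          rwa [hfmk e] at hmm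
        have h1 : k < (G.degree (f e).1 : ℝ) := by
          by_cases hc : k < (G.degree (Quot.out e).1 : ℝ)
          · have hfe : f e = Quot.out e := by rw [hf]; dsimp only; rw [if_pos hc]
            rw [hfe]; exact hc
          · have hfe : f e = ((Quot.out e).2, (Quot.out e).1) := by
              rw [hf]; dsimp only; rw [if_neg hc]
            rw [hfe]
            have heq : e = s((Quot.out e).1, (Quot.out e).2) := e.out_eq.symm
            rcases Sym2.mem_iff.mp (heq ▸ hw) with rfl | rfl
            · exact absurd hwk hc
            · exact hwk
        rw [Finset.mem_coe, Finset.mem_product, hHf, hTf, Finset.mem_filter, Finset.mem_filter]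
        exact ⟨⟨Finset.mem_univ _, h1⟩, Finset.mem_univ _, hall _ h2⟩
      · intro e1 _ e2 _ hfe
        rw [← hfmk e1, ← hfmk e2, hfe]
    calc ((G.edgeFinset.filter PB).card : ℝ) ≤ ((Hf ×ˢ Tf).card : ℝ) := by exact_mod_cast this
      _ = (Hf.card : ℝ) * (Tf.card : ℝ) := by rw [Finset.card_product]; push_cast; ring
  -- degree sum bounds
  set M : ℝ := (G.edgeFinset.card : ℝ) with hM
  have hsumdeg : ∑ v : V, (G.degree v : ℝ) = 2 * M := by
    rw [hM]
    exact_mod_cast G.sum_degrees_eq_twice_card_edges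
  have hdegnn : ∀ v ∈ Finset.univ \ Hf, (0:ℝ) ≤ (G.degree v : ℝ) := fun v _ => by positivity
  have hHbound : (Hf.card : ℝ) * k ≤ 2 * M := by
    calc (Hf.card : ℝ) * k = ∑ _v ∈ Hf, k := by rw [Finset.sum_const]; push_cast; ring
      _ ≤ ∑ v ∈ Hf, (G.degree v : ℝ) := by
          apply Finset.sum_le_sum
          intro v hv
          rw [hHf, Finset.mem_filter] at hv
          exact hv.2.le
      _ ≤ ∑ v : V, (G.degree v : ℝ) := by
          apply Finset.sum_le_sum_of_subset_of_nonneg (Finset.subset_univ _)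
          intro v _ _; positivity
      _ = 2 * M := hsumdeg
  have hTbound : (Tf.card : ℝ) * k' ≤ 2 * M := by
    calc (Tf.card : ℝ) * k' = ∑ _v ∈ Tf, k' := by rw [Finset.sum_const]; push_cast; ring
      _ ≤ ∑ v ∈ Tf, (G.degree v : ℝ) := by
          apply Finset.sum_le_sum
          intro v hv
          rw [hTf, Finset.mem_filter] at hv
          exact hv.2.le
      _ ≤ ∑ v : V, (G.degree v : ℝ) := by
          apply Finset.sum_le_sum_of_subset_of_nonneg (Finset.subset_univ _)
          intro v _ _; positivity
      _ = 2 * M := hsumdeg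
  have hMn : 2 * M ≤ n * n := by
    rw [← hsumdeg]
    calc ∑ v : V, (G.degree v : ℝ) ≤ ∑ _v : V, n := by
          apply Finset.sum_le_sum
          intro v _
          rw [hn]
          exact_mod_cast Finset.card_le_univ (G.neighborFinset v)
      _ = n * n := by rw [Finset.sum_const, Finset.card_univ, nsmul_eq_mul, hn]
  have hM4 : M ≤ 4 * mbar := by rw [hM]; linarith
  have hM0 : 0 ≤ M := hM ▸ Nat.cast_nonneg _
  -- final bound on bad edges
  have hHc : (0:ℝ) ≤ (Hf.card : ℝ) := Nat.cast_nonneg _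
  have hTc : (0:ℝ) ≤ (Tf.card : ℝ) := Nat.cast_nonneg _
  have hbad : ((G.edgeFinset.filter PB).card : ℝ) ≤ 64 * ε * mbar := by
    have hprod : (Hf.card : ℝ) * (Tf.card : ℝ) * (k * k') ≤ 4 * M ^ 2 := by
      calc (Hf.card : ℝ) * (Tf.card : ℝ) * (k * k')
          = ((Hf.card : ℝ) * k) * ((Tf.card : ℝ) * k') := by ring
        _ ≤ (2 * M) * (2 * M) :=
            mul_le_mul hHbound hTbound (mul_nonneg hTc hk'pos.le) (by linarith)
        _ = 4 * M ^ 2 := by ring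
    rcases min_cases k (mbar / (ε * k)) with ⟨hmin, hle⟩ | ⟨hmin, hle⟩
    · -- k' = k, use k² = 2n√mbar/ε
      have hk'k : k' = k := by rw [hk', hmin]
      set s : ℝ := Real.sqrt mbar with hsdef
      have hmb : s ^ 2 = mbar := Real.sq_sqrt hmbar.le
      have h1 : (Hf.card : ℝ) * (Tf.card : ℝ) * (2 * n * s) ≤ 4 * M ^ 2 * ε := by
        have h0 : (Hf.card : ℝ) * (Tf.card : ℝ) * (2 * n * s / ε) ≤ 4 * M ^ 2 := by
          calc (Hf.card : ℝ) * (Tf.card : ℝ) * (2 * n * s / ε)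
              = (Hf.card : ℝ) * (Tf.card : ℝ) * (k * k') := by
                rw [hk'k, ← sq, hksq]
            _ ≤ 4 * M ^ 2 := hprod
        have h3 := mul_le_mul_of_nonneg_right h0 hε0.le
        calc (Hf.card : ℝ) * (Tf.card : ℝ) * (2 * n * s)
            = (Hf.card : ℝ) * (Tf.card : ℝ) * (2 * n * s / ε) * ε := by
              field_simp
          _ ≤ 4 * M ^ 2 * ε := h3
      -- M² ≤ 8 n mbar s
      have hr : Real.sqrt M ^ 2 = M := Real.sq_sqrt hM0
      have hrnn : (0:ℝ) ≤ Real.sqrt M := Real.sqrt_nonneg _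
      have hr2s : Real.sqrt M ≤ 2 * s := by
        rw [show (2:ℝ) * s = Real.sqrt (4 * mbar) by
          rw [show (4:ℝ) * mbar = (2:ℝ)^2 * mbar by ring, Real.sqrt_mul (by positivity),
            Real.sqrt_sq (by norm_num)]]
        exact Real.sqrt_le_sqrt hM4
      have hrn : Real.sqrt M ≤ n := by
        have hMn2 : M ≤ n ^ 2 := by nlinarith
        calc Real.sqrt M ≤ Real.sqrt (n ^ 2) := Real.sqrt_le_sqrt hMn2
          _ = n := Real.sqrt_sq (by linarith)
      have hM2 : M ^ 2 ≤ 8 * n * mbar * s := by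
        have hcube : Real.sqrt M ^ 3 ≤ (2 * s) ^ 3 := by
          exact pow_le_pow_left₀ hrnn hr2s 3
        calc M ^ 2 = (Real.sqrt M ^ 2) ^ 2 := by rw [hr]
          _ = Real.sqrt M * Real.sqrt M ^ 3 := by ring
          _ ≤ n * (2 * s) ^ 3 :=
              mul_le_mul hrn hcube (by positivity) (by linarith)
          _ = 8 * n * mbar * s := by
              rw [show (2*s)^3 = 8 * s^2 * s by ring, hmb]; ring
      have h4 : (Hf.card : ℝ) * (Tf.card : ℝ) * (2 * n * s) ≤
          (16 * ε * mbar) * (2 * n * s) := by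
        have h5 := mul_le_mul_of_nonneg_left hM2 (show (0:ℝ) ≤ 4 * ε by positivity)
        calc (Hf.card : ℝ) * (Tf.card : ℝ) * (2 * n * s) ≤ 4 * M ^ 2 * ε := h1
          _ = 4 * ε * M ^ 2 := by ring
          _ ≤ 4 * ε * (8 * n * mbar * s) := h5
          _ = (16 * ε * mbar) * (2 * n * s) := by ring
      have hns : (0:ℝ) < 2 * n * s := by positivity
      have h4' : ((Hf.card : ℝ) * (Tf.card : ℝ)) * (2 * n * s) ≤
          (16 * ε * mbar) * (2 * n * s) := by linarith
      have h6 : (Hf.card : ℝ) * (Tf.card : ℝ) ≤ 16 * ε * mbar :=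
        le_of_mul_le_mul_right h4' hns
      have : (0:ℝ) ≤ 48 * ε * mbar := by positivity
      linarith [hCbound]
    · -- k' = mbar/(εk), so k * k' = mbar/ε
      have hk'eq : k' = mbar / (ε * k) := by rw [hk', hmin]
      have hkk' : k * k' = mbar / ε := by
        rw [hk'eq, mul_div_assoc', mul_comm ε k, ← div_div,
          mul_div_cancel_left₀ _ (ne_of_gt hkpos)]
      rw [hkk'] at hprod
      have h2 : (Hf.card : ℝ) * (Tf.card : ℝ) * mbar ≤ 4 * M ^ 2 * ε := by
        have h3 := mul_le_mul_of_nonneg_right hprod hε0.le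
        calc (Hf.card : ℝ) * (Tf.card : ℝ) * mbar
            = (Hf.card : ℝ) * (Tf.card : ℝ) * (mbar / ε) * ε := by field_simp
          _ ≤ 4 * M ^ 2 * ε := h3
      have hMsq : M ^ 2 ≤ 16 * mbar ^ 2 := by
        calc M ^ 2 = M * M := sq M
          _ ≤ (4 * mbar) * (4 * mbar) := mul_le_mul hM4 hM4 hM0 (by positivity)
          _ = 16 * mbar ^ 2 := by ring
      have h4 : (Hf.card : ℝ) * (Tf.card : ℝ) * mbar ≤ (64 * ε * mbar) * mbar := by
        calc (Hf.card : ℝ) * (Tf.card : ℝ) * mbar ≤ 4 * M ^ 2 * ε := h2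
          _ = 4 * ε * M ^ 2 := by ring
          _ ≤ 4 * ε * (16 * mbar ^ 2) := by
              exact mul_le_mul_of_nonneg_left hMsq (by positivity)
          _ = (64 * ε * mbar) * mbar := by ring
      have h4' : ((Hf.card : ℝ) * (Tf.card : ℝ)) * mbar ≤ (64 * ε * mbar) * mbar := by
        linarith
      have h6 : (Hf.card : ℝ) * (Tf.card : ℝ) ≤ 64 * ε * mbar :=
        le_of_mul_le_mul_right h4' hmbar
      linarith [hCbound]
  -- conclude
  have hcardR : M ≤ (mLL : ℝ) + (mL1H : ℝ) + ((G.edgeFinset.filter PB).card : ℝ) := by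
    rw [hA, hB, hM]
    exact_mod_cast hcard
  linarith
end

section
/- Let G be a graph, k and k' degree thresholds with k' ≤ k. Sample a uniformly random vertex u of G, and (if deg(u) > 0) a uniformly random neighbor v of u. Define X = deg(u) if deg(u) ≤ k' and deg(v) > k, and X = 0 otherwise. Then E[X] = m_{L1H}/n and E[X²] ≤ k'·E[X], where m_{L1H} is the number of edges between vertices of degree at most k' and vertices of degree greater than k, and n is the number of vertices. -/
open Classical in
/-- Sample a uniformly random vertex `u` of `G`, then a uniformly random neighbor `v`
of `u` (when `deg u > 0`), and set `X = deg u` if `deg u ≤ k'` and `deg v > k`, and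
`X = 0` otherwise.  Then `E[X] = m_{L1H}/n` and `E[X²] ≤ k'·E[X]`, where
`m_{L1H} = Σ_{u : deg u ≤ k'} deg_H(u)` and `n` is the number of vertices. -/
theorem stmt6 {V : Type*} [Fintype V] (G : SimpleGraph V) [DecidableRel G.Adj]
    (k k' : ℝ) (hk : k' ≤ k)
    (mL1H : ℕ)
    (hmL1H : mL1H = ∑ u ∈ Finset.univ.filter (fun u => (G.degree u : ℝ) ≤ k'),
        ((G.neighborFinset u).filter (fun v => k < (G.degree v : ℝ))).card)
    (EX EX2 : ℝ)
    (hEX : EX = (1 / (Fintype.card V : ℝ)) * ∑ u : V, ((G.degree u : ℝ))⁻¹ *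
        ∑ v ∈ G.neighborFinset u,
          (if (G.degree u : ℝ) ≤ k' ∧ k < (G.degree v : ℝ) then (G.degree u : ℝ) else 0))
    (hEX2 : EX2 = (1 / (Fintype.card V : ℝ)) * ∑ u : V, ((G.degree u : ℝ))⁻¹ *
        ∑ v ∈ G.neighborFinset u,
          (if (G.degree u : ℝ) ≤ k' ∧ k < (G.degree v : ℝ) then ((G.degree u : ℝ)) ^ 2 else 0)) :
    EX = (mL1H : ℝ) / (Fintype.card V : ℝ) ∧ EX2 ≤ k' * EX := by
  classical
  set f : V → ℝ := fun u =>
    (((G.neighborFinset u).filter (fun v => k < (G.degree v : ℝ))).card : ℝ) with hf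
  have h1 : ∀ u : V, ((G.degree u : ℝ))⁻¹ *
      ∑ v ∈ G.neighborFinset u,
        (if (G.degree u : ℝ) ≤ k' ∧ k < (G.degree v : ℝ) then (G.degree u : ℝ) else 0)
      = if (G.degree u : ℝ) ≤ k' then f u else 0 := by
    intro u
    by_cases hd : G.degree u = 0
    · have hne : G.neighborFinset u = ∅ := Finset.card_eq_zero.mp
        (by rw [SimpleGraph.card_neighborFinset_eq_degree]; exact hd)
      simp [hne, hf]
    · by_cases hk' : (G.degree u : ℝ) ≤ k'
      · simp only [hk', true_and, if_true]
        rw [Finset.sum_ite, Finset.sum_const, Finset.sum_const_zero, add_zero, nsmul_eq_mul]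
        have hd' : (G.degree u : ℝ) ≠ 0 := Nat.cast_ne_zero.mpr hd
        field_simp [hf]
        rfl
      · simp [hk']
  have h2 : ∀ u : V, ((G.degree u : ℝ))⁻¹ *
      ∑ v ∈ G.neighborFinset u,
        (if (G.degree u : ℝ) ≤ k' ∧ k < (G.degree v : ℝ) then ((G.degree u : ℝ)) ^ 2 else 0)
      = if (G.degree u : ℝ) ≤ k' then (G.degree u : ℝ) * f u else 0 := by
    intro u
    by_cases hd : G.degree u = 0
    · have hne : G.neighborFinset u = ∅ := Finset.card_eq_zero.mp
        (by rw [SimpleGraph.card_neighborFinset_eq_degree]; exact hd)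
      simp [hne, hf, hd]
    · by_cases hk' : (G.degree u : ℝ) ≤ k'
      · simp only [hk', true_and, if_true]
        rw [Finset.sum_ite, Finset.sum_const, Finset.sum_const_zero, add_zero, nsmul_eq_mul]
        have hd' : (G.degree u : ℝ) ≠ 0 := Nat.cast_ne_zero.mpr hd
        field_simp [hf]
        ring
      · simp [hk']
  have hEX' : EX = (1 / (Fintype.card V : ℝ)) *
      ∑ u : V, (if (G.degree u : ℝ) ≤ k' then f u else 0) := by
    rw [hEX]; congr 1; exact Finset.sum_congr rfl fun u _ => h1 u
  have hEX2' : EX2 = (1 / (Fintype.card V : ℝ)) *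
      ∑ u : V, (if (G.degree u : ℝ) ≤ k' then (G.degree u : ℝ) * f u else 0) := by
    rw [hEX2]; congr 1; exact Finset.sum_congr rfl fun u _ => h2 u
  constructor
  · rw [hEX', ← Finset.sum_filter, hmL1H]
    push_cast
    simp only [hf]
    rw [one_div, mul_comm, div_eq_mul_inv]
  · rw [hEX2', hEX', mul_comm k', mul_assoc, Finset.sum_mul]
    have hn : (0 : ℝ) ≤ 1 / (Fintype.card V : ℝ) := by positivity
    apply mul_le_mul_of_nonneg_left _ hn
    apply Finset.sum_le_sum
    intro u _
    have hfnn : (0 : ℝ) ≤ f u := by simp [hf]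
    by_cases hk' : (G.degree u : ℝ) ≤ k'
    · simp only [hk', if_true]
      nlinarith
    · simp [hk']
end
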